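/- Let E be a real Hilbert space, L a closed linear subspace of E, and C a nonempty closed convex cone in E with L ⊆ C. Then for every θ ∈ E, ‖θ − P_L(θ)‖² − ‖θ − P_C(θ)‖² = ‖P_{C ∩ L⊥}(θ)‖². -/

import Mathlib

open RealInnerProductSpace

/-- Let E be a real Hilbert space, L a closed linear subspace, C a nonempty
closed convex cone with L ⊆ C. Then for every θ ∈ E,
‖θ − P_L(θ)‖² − ‖θ − P_C(θ)‖² = ‖P_{C ∩ L⊥}(θ)‖². Metric projections are encoded as
functions with the nearest-point property. -/
theorem stmt2 {E : Type*} [NormedAddCommGroup E] [InnerProductSpace ℝ E] [CompleteSpace E]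
    (L : Submodule ℝ E) (hLclosed : IsClosed (L : Set E))
    (C : Set E) (hCne : C.Nonempty) (hCclosed : IsClosed C) (hCconv : Convex ℝ C)
    (hCcone : ∀ c ∈ C, ∀ r : ℝ, 0 ≤ r → r • c ∈ C)
    (hLC : (L : Set E) ⊆ C)
    (PL PC PI : E → E)
    (hPL : ∀ x : E, PL x ∈ L ∧ ∀ y ∈ (L : Set E), ‖x - PL x‖ ≤ ‖x - y‖)
    (hPC : ∀ x : E, PC x ∈ C ∧ ∀ y ∈ C, ‖x - PC x‖ ≤ ‖x - y‖)
    (hPI : ∀ x : E, PI x ∈ C ∩ (Lᗮ : Set E) ∧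
      ∀ y ∈ C ∩ (Lᗮ : Set E), ‖x - PI x‖ ≤ ‖x - y‖) :
    ∀ θ : E, ‖θ - PL θ‖ ^ 2 - ‖θ - PC θ‖ ^ 2 = ‖PI θ‖ ^ 2 := by
  -- C is closed under adding elements of L
  have haddL : ∀ c ∈ C, ∀ l ∈ L, c + l ∈ C := by
    intro c hc l hl
    have hmid : (1/2 : ℝ) • c + (1/2 : ℝ) • l ∈ C :=
      hCconv hc (hLC hl) (by norm_num) (by norm_num) (by norm_num)
    have := hCcone _ hmid 2 (by norm_num)
    simpa [smul_smul, smul_add] using this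
  -- orthogonality of PL
  have horth : ∀ x : E, x - PL x ∈ Lᗮ := by
    intro x
    have hinf : ‖x - PL x‖ = ⨅ w : (L : Set E), ‖x - w‖ := by
      apply le_antisymm
      · exact le_ciInf fun w => (hPL x).2 w w.2
      · have hbdd : BddBelow (Set.range fun w : (L : Set E) => ‖x - w‖) :=
          ⟨0, by rintro _ ⟨w, rfl⟩; exact norm_nonneg _⟩
        exact ciInf_le hbdd ⟨PL x, (hPL x).1⟩
    have h0 := (Submodule.norm_eq_iInf_iff_real_inner_eq_zero L (hPL x).1).1 hinf
    rw [Submodule.mem_orthogonal]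
    intro u hu
    rw [real_inner_comm]
    exact h0 u hu
  intro θ
  set a := PL θ with ha
  set b := θ - PL θ with hb
  have hbL : b ∈ Lᗮ := horth θ
  have haL : a ∈ L := (hPL θ).1
  set K : Set E := C ∩ (Lᗮ : Set E) with hK
  set p := PI θ with hp
  have hpK : p ∈ K := (hPI θ).1
  have hpC : p ∈ C := hpK.1
  have hpO : p ∈ Lᗮ := hpK.2
  have hKconv : Convex ℝ K := hCconv.inter (Lᗮ.convex)
  -- pythagoras for x ∈ L, y ∈ Lᗮ
  have pyth : ∀ x ∈ L, ∀ y ∈ Lᗮ, ‖x + y‖ ^ 2 = ‖x‖ ^ 2 + ‖y‖ ^ 2 := by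
    intro x hx y hy
    have : ⟪x, y⟫ = 0 := (Submodule.mem_orthogonal L y).1 hy x hx
    rw [norm_add_sq_real, this]; ring
  -- p minimizes ‖b - ·‖ over K
  have hbmin : ∀ y ∈ K, ‖b - p‖ ≤ ‖b - y‖ := by
    intro y hy
    have key : ∀ z ∈ Lᗮ, ‖θ - z‖ ^ 2 = ‖a‖ ^ 2 + ‖b - z‖ ^ 2 := by
      intro z hz
      have : θ - z = a + (b - z) := by rw [hb, ha]; abel
      rw [this, pyth a haL (b - z) (Lᗮ.sub_mem hbL hz)]
    have h1 : ‖θ - p‖ ^ 2 ≤ ‖θ - y‖ ^ 2 := by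
      have := (hPI θ).2 y hy
      exact pow_le_pow_left₀ (norm_nonneg _) this 2
    rw [key p hpO, key y hy.2] at h1
    have h2 : ‖b - p‖ ^ 2 ≤ ‖b - y‖ ^ 2 := by linarith
    exact (pow_le_pow_iff_left₀ (norm_nonneg _) (norm_nonneg _) (by norm_num)).1 h2
  -- variational inequality for p w.r.t. b
  have hvar : ∀ w ∈ K, ⟪b - p, w - p⟫ ≤ 0 := by
    haveI : Nonempty K := ⟨⟨p, hpK⟩⟩
    have hinf : ‖b - p‖ = ⨅ w : K, ‖b - w‖ := by
      apply le_antisymm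
      · exact le_ciInf fun w => hbmin w w.2
      · have hbdd : BddBelow (Set.range fun w : K => ‖b - w‖) :=
          ⟨0, by rintro _ ⟨w, rfl⟩; exact norm_nonneg _⟩
        exact ciInf_le hbdd ⟨p, hpK⟩
    exact (norm_eq_iInf_iff_real_inner_le_zero hKconv hpK).1 hinf
  -- ⟪b - p, p⟫ = 0 by the cone trick
  have h0K : (0 : E) ∈ K := by
    obtain ⟨c, hc⟩ := hCne
    refine ⟨by simpa using hCcone c hc 0 le_rfl, Submodule.zero_mem _⟩
  have h2K : (2 : ℝ) • p ∈ K := ⟨hCcone p hpC 2 (by norm_num), Lᗮ.smul_mem _ hpO⟩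
  have hip : ⟪b - p, p⟫ = 0 := by
    have h1 := hvar _ h2K
    have h2 := hvar 0 h0K
    have e1 : (2 : ℝ) • p - p = p := by rw [two_smul]; abel
    rw [e1] at h1
    rw [zero_sub, inner_neg_right] at h2
    linarith
  -- ‖b‖² = ‖b - p‖² + ‖p‖²
  have hpyth2 : ‖b‖ ^ 2 = ‖b - p‖ ^ 2 + ‖p‖ ^ 2 := by
    have e := norm_add_sq_real (b - p) p
    rw [hip] at e
    have e2 : b - p + p = b := by abel
    rw [e2] at e; linarith
  -- ‖θ - PC θ‖² = ‖b - p‖²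
  set q := PC θ with hq
  have hqC : q ∈ C := (hPC θ).1
  have hdist : ‖θ - q‖ ^ 2 = ‖b - p‖ ^ 2 := by
    have hle1 : ‖θ - q‖ ≤ ‖b - p‖ := by
      have hapC : a + p ∈ C := by
        have := haddL p hpC a haL
        rwa [add_comm] at this
      have := (hPC θ).2 (a + p) hapC
      have e : θ - (a + p) = b - p := by rw [hb, ha]; abel
      rwa [e] at this
    have hle2 : ‖b - p‖ ^ 2 ≤ ‖θ - q‖ ^ 2 := by
      -- w := q - PL q ∈ K
      set w := q - PL q with hw
      have hwO : w ∈ Lᗮ := horth q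
      have hwC : w ∈ C := by
        have := haddL q hqC (-(PL q)) (L.neg_mem (hPL q).1)
        simpa [hw, sub_eq_add_neg] using this
      have h1 : ‖b - p‖ ≤ ‖b - w‖ := hbmin w ⟨hwC, hwO⟩
      have h2 : ‖θ - q‖ ^ 2 = ‖a - PL q‖ ^ 2 + ‖b - w‖ ^ 2 := by
        have e : θ - q = (a - PL q) + (b - w) := by rw [hb, ha, hw]; abel
        rw [e, pyth _ (L.sub_mem haL (hPL q).1) _ (Lᗮ.sub_mem hbL hwO)]
      nlinarith [norm_nonneg (b - p), norm_nonneg (b - w), sq_nonneg ‖a - PL q‖]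
    have hle1' : ‖θ - q‖ ^ 2 ≤ ‖b - p‖ ^ 2 := pow_le_pow_left₀ (norm_nonneg _) hle1 2
    linarith
  rw [hdist]
  have : ‖θ - PL θ‖ = ‖b‖ := by rw [hb]
  rw [this, hpyth2]
  ring
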